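/- Let k > 1, x ∈ ℝ², r = |x|, t ≥ 2r, t ≥ 4k, and g ∈ L¹(ℝ²) supported in {|y| ≤ k}. Then |∫_{ℝ²} g(y)/√(t²−|x−y|²) dy − (1/√((t+r)(t−r)))∫_{ℝ²} g(y) dy| ≤ 4k‖g‖_{L¹}/((t+r)(t−r)). -/

import Mathlib

open MeasureTheory

set_option maxHeartbeats 1000000 in
theorem stmt_15 (k t : ℝ) (hk : 1 < k) (x : EuclideanSpace ℝ (Fin 2))
    (r : ℝ) (hr : r = ‖x‖) (ht4 : 4 * k ≤ t) (ht2 : 2 * r ≤ t)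
    (g : EuclideanSpace ℝ (Fin 2) → ℝ) (hg : Integrable g)
    (hsupp : Function.support g ⊆ Metric.closedBall 0 k) :
    |(∫ y, g y / Real.sqrt (t ^ 2 - ‖x - y‖ ^ 2)) -
        (1 / Real.sqrt ((t + r) * (t - r))) * ∫ y, g y| ≤
      4 * k * (∫ y, |g y|) / ((t + r) * (t - r)) := by
  have hr0 : 0 ≤ r := hr ▸ norm_nonneg x
  have hk0 : 0 < k := lt_trans one_pos hk
  have ht : 4 < t := lt_of_lt_of_le (by linarith) ht4
  have hB : 0 < (t + r) * (t - r) := by nlinarith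
  set b := Real.sqrt ((t + r) * (t - r)) with hbdef
  have hbpos : 0 < b := Real.sqrt_pos.2 hB
  have hb2 : b ^ 2 = (t + r) * (t - r) := Real.sq_sqrt hB.le
  have hbt : b ≤ t := by nlinarith
  -- pointwise bound
  have key : ∀ y, |g y / Real.sqrt (t ^ 2 - ‖x - y‖ ^ 2) - g y * b⁻¹| ≤
      |g y| * (4 * k / ((t + r) * (t - r))) := by
    intro y
    by_cases hy : g y = 0
    · simp [hy]
    · have hyk : ‖y‖ ≤ k := by
        have := hsupp (Function.mem_support.2 hy)
        simpa using this
      have hsr : ‖x - y‖ ≤ r + k := by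
        have := norm_sub_le x y; rw [← hr] at this; linarith
      have hrs : r - k ≤ ‖x - y‖ := by
        have := norm_sub_norm_le x y; rw [← hr] at this; linarith
      have hs0 : (0:ℝ) ≤ ‖x - y‖ := norm_nonneg _
      have hApos : 0 < t ^ 2 - ‖x - y‖ ^ 2 := by nlinarith
      set a := Real.sqrt (t ^ 2 - ‖x - y‖ ^ 2) with hadef
      have hapos : 0 < a := Real.sqrt_pos.2 hApos
      have ha2 : a ^ 2 = t ^ 2 - ‖x - y‖ ^ 2 := Real.sq_sqrt hApos.le
      have h1 : g y / a - g y * b⁻¹ = g y * (a⁻¹ - b⁻¹) := by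
        field_simp
      rw [h1, abs_mul]
      apply mul_le_mul_of_nonneg_left _ (abs_nonneg _)
      have heq : a⁻¹ - b⁻¹ = (b ^ 2 - a ^ 2) / (a * b * (a + b)) := by
        field_simp; ring
      rw [heq, abs_div, abs_of_pos (by positivity : (0:ℝ) < a * b * (a + b))]
      have hnum : |b ^ 2 - a ^ 2| ≤ k * (2 * r + k) := by
        rw [hb2, ha2, abs_le]; constructor <;> nlinarith
      have h5' : (2 * r + k) * t ≤ 4 * (t ^ 2 - ‖x - y‖ ^ 2) := by
        nlinarith [mul_nonneg (sub_nonneg.2 hsr) (by positivity : (0:ℝ) ≤ r + k + ‖x - y‖),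
          mul_nonneg (by linarith : (0:ℝ) ≤ t - 2 * r) (by linarith : (0:ℝ) ≤ t - 4 * k),
          mul_nonneg (by linarith : (0:ℝ) ≤ t - 2 * r) (by linarith : (0:ℝ) ≤ t),
          mul_nonneg (by linarith : (0:ℝ) ≤ t - 4 * k) (by linarith : (0:ℝ) ≤ t),
          mul_nonneg hr0 hk0.le, sq_nonneg (t - 2 * r), sq_nonneg (t - 4 * k)]
      have h5 : (2 * r + k) * b ≤ 4 * a ^ 2 := by
        have : (2 * r + k) * b ≤ (2 * r + k) * t :=
          mul_le_mul_of_nonneg_left hbt (by linarith)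
        rw [ha2]; linarith
      calc |b ^ 2 - a ^ 2| / (a * b * (a + b))
          ≤ k * (2 * r + k) / (a * b * (a + b)) := by gcongr
        _ ≤ 4 * k / ((t + r) * (t - r)) := by
            rw [div_le_div_iff₀ (by positivity) hB, ← hb2]
            have hstep : k * ((2 * r + k) * b * b) ≤ k * (4 * a ^ 2 * b) :=
              mul_le_mul_of_nonneg_left
                (mul_le_mul_of_nonneg_right h5 hbpos.le) hk0.le
            nlinarith [hstep, mul_nonneg hk0.le (mul_nonneg hapos.le (sq_nonneg b)), hb2]
  -- integrability
  have hbound : ∀ y, ‖g y / Real.sqrt (t ^ 2 - ‖x - y‖ ^ 2)‖ ≤ |g y| := by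
    intro y
    by_cases hy : g y = 0
    · simp [hy]
    · have hyk : ‖y‖ ≤ k := by
        have := hsupp (Function.mem_support.2 hy)
        simpa using this
      have hsr : ‖x - y‖ ≤ r + k := by
        have := norm_sub_le x y; rw [← hr] at this; linarith
      have h1 : (1:ℝ) ≤ t ^ 2 - ‖x - y‖ ^ 2 := by nlinarith [norm_nonneg (x - y)]
      have h2 : (1:ℝ) ≤ Real.sqrt (t ^ 2 - ‖x - y‖ ^ 2) := by
        rw [show (1:ℝ) = Real.sqrt 1 from (Real.sqrt_one).symm]
        exact Real.sqrt_le_sqrt h1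
      rw [Real.norm_eq_abs, abs_div]
      rw [abs_of_nonneg (Real.sqrt_nonneg _)]
      exact div_le_self (abs_nonneg _) h2
  have hmeas : AEStronglyMeasurable
      (fun y => g y / Real.sqrt (t ^ 2 - ‖x - y‖ ^ 2)) volume := by
    have heqf : (fun y : EuclideanSpace ℝ (Fin 2) =>
        g y / Real.sqrt (t ^ 2 - ‖x - y‖ ^ 2)) =
        fun y => g y * (Real.sqrt (t ^ 2 - ‖x - y‖ ^ 2))⁻¹ := by
      funext y; rw [div_eq_mul_inv]
    rw [heqf]
    exact hg.aestronglyMeasurable.mul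
      ((Real.continuous_sqrt.comp
        (by continuity)).measurable.inv.aestronglyMeasurable)
  have hint : Integrable (fun y => g y / Real.sqrt (t ^ 2 - ‖x - y‖ ^ 2)) :=
    Integrable.mono' hg.abs hmeas (Filter.Eventually.of_forall hbound)
  have hsplit : (∫ y, g y / Real.sqrt (t ^ 2 - ‖x - y‖ ^ 2)) -
      (1 / b) * ∫ y, g y =
      ∫ y, (g y / Real.sqrt (t ^ 2 - ‖x - y‖ ^ 2) - g y * b⁻¹) := by
    rw [integral_sub hint (hg.mul_const b⁻¹), integral_mul_const]
    ring
  rw [hsplit]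
  calc |∫ y, (g y / Real.sqrt (t ^ 2 - ‖x - y‖ ^ 2) - g y * b⁻¹)|
      ≤ ∫ y, |g y / Real.sqrt (t ^ 2 - ‖x - y‖ ^ 2) - g y * b⁻¹| :=
      by simpa [Real.norm_eq_abs] using
          norm_integral_le_integral_norm
            (fun y => g y / Real.sqrt (t ^ 2 - ‖x - y‖ ^ 2) - g y * b⁻¹)
    _ ≤ ∫ y, |g y| * (4 * k / ((t + r) * (t - r))) := by
        apply integral_mono (hint.sub (hg.mul_const b⁻¹)).abs
          (hg.abs.mul_const _) key
    _ = (∫ y, |g y|) * (4 * k / ((t + r) * (t - r))) := integral_mul_const _ _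
    _ = 4 * k * (∫ y, |g y|) / ((t + r) * (t - r)) := by ring
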